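/- Let K, k ≥ 2 be integers, and for integers i ≥ 1 set c_i := ∑_{(i−1)k < j ≤ ik} binomial(j + K − 1, K − 1). Then: (a) c_i ≤ K^K · (ik)^K for all i ≥ 1; and (b) for every prime p and every real s > 1, ∑_{j ≥ 1} τ_K(p^j) · (p^j / rad_k(p^j)) · p^{−js} ≤ 1 + ∑_{i ≥ 1} c_i · p^{−is}. -/

import Mathlib

set_option maxHeartbeats 1000000


/-- `τ_K(n)`: the number of `K`-tuples of positive integers with product `n`. -/
noncomputable def tauNat (K n : ℕ) : ℕ :=
  Nat.card {d : Fin K → ℕ // (∀ i, 0 < d i) ∧ ∏ i, d i = n}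

/-- `rad_k(n)`: the minimum of `lcm(n₁,…,n_k)` over factorizations `n = n₁⋯n_k`
into positive integers. -/
noncomputable def radk (k n : ℕ) : ℕ :=
  sInf {m : ℕ | ∃ d : Fin k → ℕ, (∀ i, 0 < d i) ∧ ∏ i, d i = n ∧ Finset.univ.lcm d = m}

/-- `c_i := ∑_{(i−1)k < j ≤ ik} binom(j + K − 1, K − 1)`. -/
def cCoeff (K k i : ℕ) : ℕ :=
  ∑ j ∈ Finset.Ioc ((i - 1) * k) (i * k), Nat.choose (j + K - 1) (K - 1)

lemma card_sum_eq (K n : ℕ) :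
    Nat.card {P : Fin K → ℕ // ∑ i, P i = n} = (K + n - 1).choose n := by
  rw [← Nat.card_congr (Sym.equivNatSumOfFintype (Fin K) n), Nat.card_eq_fintype_card,
    Sym.card_sym_eq_choose, Fintype.card_fin]

lemma tauNat_prime_pow {p : ℕ} (hp : p.Prime) (K n : ℕ) (hK : 1 ≤ K) :
    tauNat K (p ^ n) = (n + K - 1).choose (K - 1) := by
  have hinj : Function.Injective (fun a : ℕ => p ^ a) := Nat.pow_right_injective hp.two_le
  have e : {P : Fin K → ℕ // ∑ i, P i = n} ≃
      {d : Fin K → ℕ // (∀ i, 0 < d i) ∧ ∏ i, d i = p ^ n} := by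
    refine Equiv.ofBijective (fun P => ⟨fun i => p ^ (P.1 i), fun i => pow_pos hp.pos _, ?_⟩) ?_
    · rw [Finset.prod_pow_eq_pow_sum, P.2]
    constructor
    · intro P Q h
      ext i
      exact hinj (congrArg (fun d => d.1 i) h)
    · rintro ⟨d, hpos, hprod⟩
      have hdvd : ∀ i, ∃ a, a ≤ n ∧ d i = p ^ a := fun i =>
        (Nat.dvd_prime_pow hp).1 (hprod ▸ Finset.dvd_prod_of_mem d (Finset.mem_univ i))
      choose a ha hpa using hdvd
      have hsum : ∑ i, a i = n := by
        apply hinj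
        show p ^ (∑ i, a i) = p ^ n
        rw [← Finset.prod_pow_eq_pow_sum, ← hprod]
        exact Finset.prod_congr rfl fun i _ => (hpa i).symm
      exact ⟨⟨a, hsum⟩, Subtype.ext (funext fun i => (hpa i).symm)⟩
  unfold tauNat
  rw [← Nat.card_congr e, card_sum_eq]
  have h3 : (K + n - 1).choose n = (n + K - 1).choose (n + K - 1 - (K - 1)) := by
    congr 1 <;> omega
  rw [h3, Nat.choose_symm (by omega)]

lemma le_radk {p k : ℕ} (hp : p.Prime) (hk : 0 < k) (n : ℕ) :
    p ^ ((n + k - 1) / k) ≤ radk k (p ^ n) := by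
  have hne : {m : ℕ | ∃ d : Fin k → ℕ,
      (∀ i, 0 < d i) ∧ ∏ i, d i = p ^ n ∧ Finset.univ.lcm d = m}.Nonempty := by
    refine ⟨_, fun i => if i = (⟨0, hk⟩ : Fin k) then p ^ n else 1, fun i => ?_, ?_, rfl⟩
    · dsimp only; split
      · exact pow_pos hp.pos n
      · exact one_pos
    · simp
  obtain ⟨d, hpos, hprod, hlcm⟩ := Nat.sInf_mem hne
  have hdvd : ∀ i, ∃ a, a ≤ n ∧ d i = p ^ a := fun i =>
    (Nat.dvd_prime_pow hp).1 (hprod ▸ Finset.dvd_prod_of_mem d (Finset.mem_univ i))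
  choose a ha hpa using hdvd
  have hinj : Function.Injective (fun a : ℕ => p ^ a) := Nat.pow_right_injective hp.two_le
  have hsum : ∑ i, a i = n := by
    apply hinj
    show p ^ (∑ i, a i) = p ^ n
    rw [← Finset.prod_pow_eq_pow_sum, ← hprod]
    exact Finset.prod_congr rfl fun i _ => (hpa i).symm
  haveI : NeZero k := ⟨hk.ne'⟩
  obtain ⟨i0, -, hi0⟩ := Finset.exists_mem_eq_sup Finset.univ Finset.univ_nonempty a
  have hdvd0 : p ^ (Finset.univ.sup a) ∣ radk k (p ^ n) := by
    rw [radk, ← hlcm, hi0, ← hpa i0]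
    exact Finset.dvd_lcm (Finset.mem_univ i0)
  have hlcm_pos : 0 < radk k (p ^ n) := by
    rw [radk, ← hlcm]
    rcases Nat.eq_zero_or_pos (Finset.univ.lcm d) with h | h
    · exfalso
      rw [Finset.lcm_eq_zero_iff] at h
      obtain ⟨i, -, hi⟩ := h
      exact (hpos i).ne' hi
    · exact h
  have hM : (n + k - 1) / k ≤ Finset.univ.sup a := by
    rw [Nat.div_le_iff_le_mul_add_pred hk]
    have hn : n ≤ k * Finset.univ.sup a := by
      calc n = ∑ i, a i := hsum.symm
        _ ≤ Finset.univ.card • Finset.univ.sup a :=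
            Finset.sum_le_card_nsmul _ _ _ fun i _ => Finset.le_sup (Finset.mem_univ i)
        _ = k * Finset.univ.sup a := by simp [Finset.card_univ, smul_eq_mul]
    have h4 : n + k - 1 ≤ n + (k - 1) := (Nat.add_sub_assoc hk n).le
    exact h4.trans (Nat.add_le_add_right hn _)
  calc p ^ ((n + k - 1) / k) ≤ p ^ (Finset.univ.sup a) :=
        Nat.pow_le_pow_right hp.pos hM
    _ ≤ radk k (p ^ n) := Nat.le_of_dvd hlcm_pos hdvd0

lemma cCoeff_succ (K k m : ℕ) (hK : 1 ≤ K) :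
    cCoeff K k (m + 1) = ∑ r ∈ Finset.range k, ((m * k + r + K).choose (K - 1)) := by
  unfold cCoeff
  rw [show (m + 1 - 1) * k = m * k from by simp, show (m + 1) * k = m * k + k from by ring,
    ← Finset.Ico_add_one_add_one_eq_Ioc, Finset.sum_Ico_eq_sum_range]
  refine Finset.sum_congr (by congr 1; omega) fun r _ => ?_
  congr 1
  omega

lemma partA (K k : ℕ) (hK : 2 ≤ K) (hk : 2 ≤ k) (i : ℕ) (hi : 1 ≤ i) :
    cCoeff K k i ≤ K ^ K * (i * k) ^ K := by
  obtain ⟨m, rfl⟩ : ∃ m, i = m + 1 := ⟨i - 1, by omega⟩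
  have hik : 2 ≤ (m + 1) * k := by nlinarith
  have hbound : ∀ j ∈ Finset.Ioc ((m + 1 - 1) * k) ((m + 1) * k),
      (j + K - 1).choose (K - 1) ≤ ((m + 1) * k * K) ^ (K - 1) := by
    intro j hj
    have hj2 := Finset.mem_Ioc.mp hj
    have h1 : j + K - 1 ≤ (m + 1) * k * K := by
      have := Nat.add_le_mul hik hK
      omega
    calc (j + K - 1).choose (K - 1) ≤ (j + K - 1) ^ (K - 1) := Nat.choose_le_pow _ _
      _ ≤ ((m + 1) * k * K) ^ (K - 1) := Nat.pow_le_pow_left h1 _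
  calc cCoeff K k (m + 1)
      ≤ (Finset.Ioc ((m + 1 - 1) * k) ((m + 1) * k)).card • ((m + 1) * k * K) ^ (K - 1) :=
        Finset.sum_le_card_nsmul _ _ _ hbound
    _ = k * ((m + 1) * k * K) ^ (K - 1) := by
        rw [Nat.card_Ioc, smul_eq_mul]
        congr 1
        simp only [Nat.add_sub_cancel]
        rw [Nat.add_mul, one_mul]
        omega
    _ ≤ ((m + 1) * k) * (((m + 1) * k) ^ (K - 1) * K ^ (K - 1)) := by
        rw [mul_pow]
        exact Nat.mul_le_mul (Nat.le_mul_of_pos_left k (by omega)) le_rfl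
    _ = ((m + 1) * k) ^ (K - 1 + 1) * K ^ (K - 1) := by rw [pow_succ]; ring
    _ ≤ ((m + 1) * k) ^ K * K ^ K := by
        refine Nat.mul_le_mul (Nat.pow_le_pow_right (by omega) (by omega))
          (Nat.pow_le_pow_right (by omega) (by omega))
    _ = K ^ K * ((m + 1) * k) ^ K := Nat.mul_comm _ _

/-- for integers `K, k ≥ 2`:
(a) `c_i ≤ K^K · (ik)^K` for all `i ≥ 1`; and
(b) for every prime `p` and real `s > 1`,
`∑_{j ≥ 1} τ_K(p^j) · (p^j / rad_k(p^j)) · p^{−js} ≤ 1 + ∑_{i ≥ 1} c_i · p^{−is}`. -/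
theorem stmt15 (K k : ℕ) (hK : 2 ≤ K) (hk : 2 ≤ k) :
    (∀ i : ℕ, 1 ≤ i → cCoeff K k i ≤ K ^ K * (i * k) ^ K) ∧
    (∀ p : ℕ, p.Prime → ∀ s : ℝ, 1 < s →
      ∑' j : ℕ, (tauNat K (p ^ (j + 1)) : ℝ) *
          ((p : ℝ) ^ (j + 1) / (radk k (p ^ (j + 1)) : ℝ)) *
          (p : ℝ) ^ (-(((j : ℝ) + 1) * s))
        ≤ 1 + ∑' i : ℕ, (cCoeff K k (i + 1) : ℝ) * (p : ℝ) ^ (-(((i : ℝ) + 1) * s))) := by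
  refine ⟨fun i hi => partA K k hK hk i hi, fun p hp s hs => ?_⟩
  have hk0 : 0 < k := by omega
  haveI : NeZero k := ⟨hk0.ne'⟩
  have hP1 : (1 : ℝ) < (p : ℝ) := by exact_mod_cast hp.one_lt
  have hP0 : (0 : ℝ) < (p : ℝ) := by linarith
  set P : ℝ := (p : ℝ) with hPdef
  set F : ℕ → ℝ := fun j => (tauNat K (p ^ (j + 1)) : ℝ) *
      (P ^ (j + 1) / (radk k (p ^ (j + 1)) : ℝ)) * P ^ (-(((j : ℝ) + 1) * s)) with hF
  set h : ℕ → ℝ := fun i => (cCoeff K k (i + 1) : ℝ) * P ^ (-(((i : ℝ) + 1) * s)) with hh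
  set g : ℕ → ℝ := fun j => (((j + K).choose (K - 1) : ℕ) : ℝ) *
      P ^ (-((((j / k : ℕ) : ℝ) + 1) * s)) with hg
  set G : ℕ × Fin k → ℝ := fun z => (((z.1 * k + (z.2 : ℕ) + K).choose (K - 1) : ℕ) : ℝ) *
      P ^ (-(((z.1 : ℝ) + 1) * s)) with hG
  show ∑' j, F j ≤ 1 + ∑' i, h i
  -- termwise bound F ≤ g
  have hFg : ∀ j, F j ≤ g j := by
    intro j
    have htau : tauNat K (p ^ (j + 1)) = (j + K).choose (K - 1) := by
      rw [tauNat_prime_pow hp K (j + 1) (by omega)]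
      congr 1
      omega
    set c : ℕ := j / k + 1 with hc
    have hcle : c ≤ j + 1 := by
      have := Nat.div_le_self j k
      omega
    have hrad : (P ^ c : ℝ) ≤ (radk k (p ^ (j + 1)) : ℝ) := by
      have h1 := le_radk hp hk0 (j + 1)
      have h2 : (j + 1 + k - 1) / k = c := by
        rw [show j + 1 + k - 1 = j + k from by omega, Nat.add_div_right _ hk0, hc]
      rw [h2] at h1
      rw [hPdef]
      exact_mod_cast h1
    have hradpos : (0 : ℝ) < P ^ c := by positivity
    have hdiv : P ^ (j + 1) / (radk k (p ^ (j + 1)) : ℝ) ≤ P ^ (j + 1 - c) := by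
      have := div_le_div_of_nonneg_left (a := P ^ (j + 1)) (by positivity) hradpos hrad
      rwa [pow_sub₀ P (by positivity) hcle, ← div_eq_mul_inv]
    have hcR : ((c : ℕ) : ℝ) = ((j / k : ℕ) : ℝ) + 1 := by push_cast [hc]; ring
    calc F j ≤ (((j + K).choose (K - 1) : ℕ) : ℝ) * P ^ (j + 1 - c) * P ^ (-(((j : ℝ) + 1) * s)) := by
          simp only [hF]
          rw [htau]
          have hx : (0 : ℝ) ≤ P ^ (-(((j : ℝ) + 1) * s)) := Real.rpow_nonneg hP0.le _
          exact mul_le_mul_of_nonneg_right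
            (mul_le_mul_of_nonneg_left hdiv (by positivity)) hx
      _ = (((j + K).choose (K - 1) : ℕ) : ℝ) *
            P ^ ((((j + 1 - c : ℕ) : ℝ)) + (-(((j : ℝ) + 1) * s))) := by
          rw [mul_assoc, ← Real.rpow_natCast P (j + 1 - c), ← Real.rpow_add hP0]
      _ ≤ g j := by
          rw [hg]
          refine mul_le_mul_of_nonneg_left ?_ (by positivity)
          refine Real.rpow_le_rpow_of_exponent_le hP1.le ?_
          rw [← hcR]
          have hc1 : ((j + 1 - c : ℕ) : ℝ) = ((j : ℝ) + 1) - (c : ℝ) := by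
            push_cast [hcle]
            ring
          have hc2 : (c : ℝ) ≤ (j : ℝ) + 1 := by exact_mod_cast hcle
          rw [hc1]
          nlinarith
  -- g = G ∘ divMod
  have hgG : g = G ∘ ⇑(Nat.divModEquiv k) := by
    funext j
    simp only [hg, hG, Function.comp_apply, Nat.divModEquiv_apply]
    rw [show ((Fin.ofNat k j : Fin k) : ℕ) = j % k from rfl, Nat.div_add_mod' j k]
  -- row sums of G equal h
  have hrow : (fun i : ℕ => ∑' r : Fin k, G (i, r)) = h := by
    funext i
    rw [tsum_fintype, hh]
    simp only [hG]
    rw [← Finset.sum_mul]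
    congr 1
    rw [cCoeff_succ K k i (by omega)]
    push_cast
    rw [Fin.sum_univ_eq_sum_range (fun r : ℕ => (((i * k + r + K).choose (K - 1) : ℕ) : ℝ)) k]
  -- summability of h
  set x : ℝ := P ^ (-s) with hx
  have hx0 : 0 ≤ x := Real.rpow_nonneg hP0.le _
  have hx1 : x < 1 := Real.rpow_lt_one_of_one_lt_of_neg hP1 (by linarith)
  have hXx : ∀ i : ℕ, P ^ (-(((i : ℝ) + 1) * s)) = x ^ (i + 1) := by
    intro i
    have : P ^ (-(((i : ℝ) + 1) * s)) = (P ^ (-s)) ^ ((((i + 1 : ℕ)) : ℝ)) := by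
      rw [← Real.rpow_mul hP0.le]
      congr 1
      push_cast
      ring
    rw [this, Real.rpow_natCast]
  have hsum1 : Summable (fun n : ℕ => (n : ℝ) ^ K * x ^ n) :=
    summable_pow_mul_geometric_of_norm_lt_one K
      (by rwa [Real.norm_eq_abs, abs_of_nonneg hx0])
  have hsum2 : Summable (fun i : ℕ => (((i + 1 : ℕ)) : ℝ) ^ K * x ^ (i + 1)) :=
    (summable_nat_add_iff 1).2 hsum1
  have hmaj : Summable (fun i : ℕ =>
      ((K : ℝ) ^ K * (k : ℝ) ^ K) * ((((i + 1 : ℕ)) : ℝ) ^ K * x ^ (i + 1))) :=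
    hsum2.mul_left _
  have hh_sum : Summable h := by
    refine Summable.of_nonneg_of_le (fun i => ?_) (fun i => ?_) hmaj
    · simp only [hh]; positivity
    · simp only [hh]
      rw [hXx i]
      have hA := partA K k hK hk (i + 1) (by omega)
      calc (cCoeff K k (i + 1) : ℝ) * x ^ (i + 1)
          ≤ ((K ^ K * ((i + 1) * k) ^ K : ℕ) : ℝ) * x ^ (i + 1) := by
            refine mul_le_mul_of_nonneg_right ?_ (pow_nonneg hx0 _)
            exact_mod_cast hA
        _ = (K : ℝ) ^ K * (k : ℝ) ^ K * ((((i + 1 : ℕ)) : ℝ) ^ K * x ^ (i + 1)) := by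
            push_cast [mul_pow]
            ring
  -- summability of G and g
  have hGnn : 0 ≤ G := by
    intro z
    simp only [hG]
    positivity
  have hG_sum : Summable G := (summable_prod_of_nonneg hGnn).2
    ⟨fun i => Summable.of_finite, by rw [show (fun i : ℕ => ∑' r : Fin k, G (i, r)) = h from hrow]; exact hh_sum⟩
  have hg_sum : Summable g := by
    rw [hgG]
    exact (Nat.divModEquiv k).summable_iff.2 hG_sum
  have hF_nonneg : ∀ j, 0 ≤ F j := by
    intro j
    simp only [hF]
    positivity
  have hF_sum : Summable F := Summable.of_nonneg_of_le hF_nonneg hFg hg_sum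
  calc ∑' j, F j ≤ ∑' j, g j := Summable.tsum_le_tsum hFg hF_sum hg_sum
    _ = ∑' z, G z := by rw [hgG]; exact (Nat.divModEquiv k).tsum_eq G
    _ = ∑' i, ∑' r : Fin k, G (i, r) := Summable.tsum_prod' hG_sum fun i => Summable.of_finite
    _ = ∑' i, h i := by rw [hrow]
    _ ≤ 1 + ∑' i, h i := le_add_of_nonneg_left zero_le_one
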